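/- Let 𝒜 be a skeletally small abelian category, X an object of 𝒜, and Δ a bicomplete subobject chain of X. Then: (1) if Y ∈ Δ and Y ≠ Y⁻_Δ, then (Y⁻_Δ)⁺_Δ = Y; (2) if Y ∈ Δ and Y ≠ Y⁺_Δ, then (Y⁺_Δ)⁻_Δ = Y; (3) there is an equality of multisets sf⁻(Δ) = sf⁺(Δ). -/

import Mathlib

open CategoryTheory CategoryTheory.Limits

universe w v u

namespace JHS

variable {𝒜 : Type u} [Category.{v} 𝒜] [Abelian 𝒜]

variable {X : 𝒜}

/-- The diagram in `𝒜` associated to a set of subobjects of `X`, given by the underlying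
objects and the canonical inclusion monomorphisms between them. -/
@[simps]
noncomputable def chainDiagram (Δ : Set (Subobject X)) : Δ ⥤ 𝒜 where
  obj Y := (Y.1 : 𝒜)
  map {Y Z} f := Subobject.ofLE Y.1 Z.1 (leOfHom f)
  map_id Y := Subobject.ofLE_refl Y.1
  map_comp {Y Z W} f g := (Subobject.ofLE_comp_ofLE Y.1 Z.1 W.1 (leOfHom f) (leOfHom g)).symm

/-- The cocone over the diagram of a set of subobjects of `X` with vertex an upper bound. -/
@[simps]
noncomputable def chainCocone (Δ : Set (Subobject X)) (W : Subobject X) (h : ∀ Y ∈ Δ, Y ≤ W) :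
    Cocone (chainDiagram Δ) where
  pt := (W : 𝒜)
  ι :=
    { app := fun Y => Subobject.ofLE Y.1 W (h Y.1 Y.2)
      naturality := fun Y Z f => by
        simp [chainDiagram, Subobject.ofLE_comp_ofLE] }

/-- The cone over the diagram of a set of subobjects of `X` with vertex a lower bound. -/
@[simps]
noncomputable def chainCone (Δ : Set (Subobject X)) (W : Subobject X) (h : ∀ Y ∈ Δ, W ≤ Y) :
    Cone (chainDiagram Δ) where
  pt := (W : 𝒜)
  π :=
    { app := fun Y => Subobject.ofLE W Y.1 (h Y.1 Y.2)
      naturality := fun Y Z f => by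
        simp [chainDiagram, Subobject.ofLE_comp_ofLE] }

/-- `W` is the colimit of the chain `Δ` of subobjects of `X`, as a subobject of `X`:
the colimit of the diagram of inclusions exists and the induced morphism to `X` is a
monomorphism with image `W`.  Equivalently, the canonical cocone with vertex `W` is a
colimit cocone. -/
def IsColimSub (Δ : Set (Subobject X)) (W : Subobject X) : Prop :=
  ∃ h : ∀ Y ∈ Δ, Y ≤ W, Nonempty (IsColimit (chainCocone Δ W h))

/-- `W` is the limit of the chain `Δ` of subobjects of `X` (such a limit is automatically a
subobject of `X`): the canonical cone with vertex `W` is a limit cone. -/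
def IsLimSub (Δ : Set (Subobject X)) (W : Subobject X) : Prop :=
  ∃ h : ∀ Y ∈ Δ, W ≤ Y, Nonempty (IsLimit (chainCone Δ W h))

/-- A pre-subobject chain: a set of subobjects totally ordered under inclusion. -/
def IsPreChain (Δ : Set (Subobject X)) : Prop :=
  IsChain (· ≤ ·) Δ

/-- A subobject chain: a pre-subobject chain containing `⊥ = 0` and `⊤ = X`. -/
def IsSubChain (Δ : Set (Subobject X)) : Prop :=
  IsPreChain Δ ∧ ⊥ ∈ Δ ∧ ⊤ ∈ Δ

/-- A chain is cocomplete if every subset has a colimit which is a subobject of `X` and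
lies in the chain. -/
def Cocomplete (Δ : Set (Subobject X)) : Prop :=
  ∀ Δ' ⊆ Δ, ∃ W ∈ Δ, IsColimSub Δ' W

/-- A chain is complete if every subset has a limit which lies in the chain. -/
def Complete (Δ : Set (Subobject X)) : Prop :=
  ∀ Δ' ⊆ Δ, ∃ W ∈ Δ, IsLimSub Δ' W

/-- A chain is bicomplete if it is both cocomplete and complete. -/
def Bicomplete (Δ : Set (Subobject X)) : Prop :=
  Cocomplete Δ ∧ Complete Δ

/-- `W = Y⁻_Δ` is the predecessor of `Y` in `Δ`: the colimit of `{Z ∈ Δ | Z ⊊ Y}`,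
with the convention `0⁻_Δ = 0`. -/
def IsPred (Δ : Set (Subobject X)) (Y W : Subobject X) : Prop :=
  (Y = ⊥ ∧ W = ⊥) ∨ (Y ≠ ⊥ ∧ IsColimSub {Z | Z ∈ Δ ∧ Z < Y} W)

/-- `W = Y⁺_Δ` is the successor of `Y` in `Δ`: the limit of `{Z ∈ Δ | Y ⊊ Z}`,
with the convention `X⁺_Δ = X`. -/
def IsSucc (Δ : Set (Subobject X)) (Y W : Subobject X) : Prop :=
  (Y = ⊤ ∧ W = ⊤) ∨ (Y ≠ ⊤ ∧ IsLimSub {Z | Z ∈ Δ ∧ Y < Z} W)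

/-- The quotient (subfactor) `Y/W` of two nested subobjects of `X`: the cokernel of the
inclusion `W → Y`. -/
noncomputable def quot (W Y : Subobject X) (h : W ≤ Y) : 𝒜 :=
  cokernel (Subobject.ofLE W Y h)

/-- A composition series of `X`: a bicomplete subobject chain all of whose subfactors
`Y/Y⁻_Δ` (for `Y ∈ Δ` with `Y ≠ Y⁻_Δ`) are simple. -/
def IsCompSeries (Δ : Set (Subobject X)) : Prop :=
  IsSubChain Δ ∧ Bicomplete Δ ∧
    ∀ Y ∈ Δ, ∀ (W) (h : W ≤ Y), IsPred Δ Y W → W ≠ Y → Simple (quot W Y h)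

variable (X) in
/-- Axiom (JHS1): `X` is subobject cocomplete. -/
def JHS1 : Prop :=
  ∀ Δ : Set (Subobject X), IsPreChain Δ → ∃ W, IsColimSub Δ W

variable (X) in
/-- Axiom (JHS2): `X` is subobject complete. -/
def JHS2 : Prop :=
  ∀ Δ : Set (Subobject X), IsPreChain Δ → ∃ W, IsLimSub Δ W

variable (X) in
/-- Axiom (JHS3). -/
def JHS3 : Prop :=
  JHS1 X ∧ ∀ (Δ : Set (Subobject X)) (Z W : Subobject X),
    IsPreChain Δ → IsColimSub Δ W → IsColimSub ((· ⊓ Z) '' Δ) (W ⊓ Z)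

variable (X) in
/-- Axiom (JHS4). -/
def JHS4 : Prop :=
  JHS2 X ∧ ∀ (Δ : Set (Subobject X)) (Z W : Subobject X),
    IsPreChain Δ → IsLimSub Δ W → IsLimSub ((· ⊔ Z) '' Δ) (W ⊔ Z)

variable (X) in
/-- `X` is weakly Jordan–Hölder–Schreier. -/
def WeaklyJHS : Prop :=
  JHS3 X ∧ JHS4 X

variable (X) in
/-- Axiom (JHS5): if `X ≠ 0`, every composition series of `X` has a nonempty subfactor
multiset. -/
def JHS5 : Prop :=
  ¬ IsZero X → ∀ Δ : Set (Subobject X), IsCompSeries Δ →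
    ∃ Y ∈ Δ, ∃ W, IsPred Δ Y W ∧ W ≠ Y

variable (X) in
/-- `X` is Jordan–Hölder–Schreier. -/
def IsJHS : Prop :=
  WeaklyJHS X ∧ JHS5 X

/-- The index set of the lower subfactor multiset `sf⁻(Δ)`: elements `Y ∈ Δ` admitting a
predecessor `Y⁻_Δ ≠ Y`. -/
def lowerIdx (Δ : Set (Subobject X)) : Type _ :=
  {Y : Subobject X // Y ∈ Δ ∧ ∃ W, IsPred Δ Y W ∧ W ≠ Y}

/-- The index set of the upper subfactor multiset `sf⁺(Δ)`: elements `Y ∈ Δ` admitting a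
successor `Y⁺_Δ ≠ Y`. -/
def upperIdx (Δ : Set (Subobject X)) : Type _ :=
  {Y : Subobject X // Y ∈ Δ ∧ ∃ W, IsSucc Δ Y W ∧ W ≠ Y}

/-- Subfactor equivalence of two chains: a bijection of the index sets of their subfactor
multisets under which corresponding subfactors are isomorphic. -/
def SubfactorEquiv (Δ Γ : Set (Subobject X)) : Prop :=
  ∃ e : lowerIdx Δ ≃ lowerIdx Γ,
    ∀ (Y : lowerIdx Δ) (W : Subobject X) (hW : W ≤ Y.1) (V : Subobject X)
      (hV : V ≤ (e Y).1),
      IsPred Δ Y.1 W → IsPred Γ (e Y).1 V →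
      Nonempty (quot W Y.1 hW ≅ quot V (e Y).1 hV)

/-- The lower conflation `con⁻(Δ, Γ)`. -/
def conLower (Δ Γ : Set (Subobject X)) : Set (Subobject X) :=
  Δ ∪ {V | ∃ Y ∈ Δ, ∃ Z ∈ Γ, ∃ W, IsPred Δ Y W ∧ V = W ⊔ (Y ⊓ Z)}

/-- The upper conflation `con⁺(Δ, Γ)`. -/
def conUpper (Δ Γ : Set (Subobject X)) : Set (Subobject X) :=
  Δ ∪ {V | ∃ Y ∈ Δ, ∃ Z ∈ Γ, ∃ W, IsSucc Δ Y W ∧ V = Y ⊔ (W ⊓ Z)}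

/-- A colimit-subobject is a least upper bound. -/
lemma IsColimSub.le_of_forall_le {Δ' : Set (Subobject X)} {W U : Subobject X}
    (hW : IsColimSub Δ' W) (hU : ∀ Y ∈ Δ', Y ≤ U) : W ≤ U := by
  obtain ⟨h, ⟨hc⟩⟩ := hW
  refine Subobject.le_of_comm (hc.desc (chainCocone Δ' U hU)) ?_
  refine hc.hom_ext fun Y => ?_
  erw [← Category.assoc, hc.fac (chainCocone Δ' U hU) Y]
  exact (Subobject.ofLE_arrow _).trans (Subobject.ofLE_arrow _).symm

/-- A limit-subobject over a nonempty diagram is a greatest lower bound. -/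
lemma IsLimSub.le_of_forall_le {Δ' : Set (Subobject X)} {W U : Subobject X}
    (hW : IsLimSub Δ' W) (hne : Δ'.Nonempty) (hU : ∀ Y ∈ Δ', U ≤ Y) : U ≤ W := by
  obtain ⟨h, ⟨hc⟩⟩ := hW
  obtain ⟨Y0, hY0⟩ := hne
  refine Subobject.le_of_comm (hc.lift (chainCone Δ' U hU)) ?_
  have harr : (W : 𝒜) ⟶ (Y0 : 𝒜) := Subobject.ofLE W Y0 (h Y0 hY0)
  have h1 : (chainCone Δ' W h).π.app ⟨Y0, hY0⟩ ≫ (Y0 : Subobject X).arrow = W.arrow := by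
    exact Subobject.ofLE_arrow _
  have h2 := hc.fac (chainCone Δ' U hU) ⟨Y0, hY0⟩
  erw [← h1, ← Category.assoc, h2]
  exact Subobject.ofLE_arrow _

lemma IsColimSub.unique {Δ' : Set (Subobject X)} {W W' : Subobject X}
    (h1 : IsColimSub Δ' W) (h2 : IsColimSub Δ' W') : W = W' :=
  le_antisymm (h1.le_of_forall_le h2.choose) (h2.le_of_forall_le h1.choose)

lemma IsLimSub.unique {Δ' : Set (Subobject X)} {W W' : Subobject X}
    (hne : Δ'.Nonempty) (h1 : IsLimSub Δ' W) (h2 : IsLimSub Δ' W') : W = W' :=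
  le_antisymm (h2.le_of_forall_le hne h1.choose) (h1.le_of_forall_le hne h2.choose)

lemma IsPred.le {Δ : Set (Subobject X)} {Y W : Subobject X} (hp : IsPred Δ Y W) : W ≤ Y := by
  rcases hp with ⟨rfl, rfl⟩ | ⟨hY0, hc⟩
  · exact le_rfl
  · exact hc.le_of_forall_le fun Z hZ => hZ.2.le

lemma IsSucc.ge {Δ : Set (Subobject X)} {Y W : Subobject X}
    (hsc : IsSubChain Δ) (hs : IsSucc Δ Y W) : Y ≤ W := by
  rcases hs with ⟨rfl, rfl⟩ | ⟨hY0, hc⟩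
  · exact le_rfl
  · exact hc.le_of_forall_le ⟨⊤, hsc.2.2, lt_top_iff_ne_top.mpr hY0⟩ fun Z hZ => hZ.2.le

lemma IsPred.unique {Δ : Set (Subobject X)} {Y W W' : Subobject X}
    (h1 : IsPred Δ Y W) (h2 : IsPred Δ Y W') : W = W' := by
  rcases h1 with ⟨rfl, rfl⟩ | ⟨hY0, hc⟩
  · rcases h2 with ⟨_, rfl⟩ | ⟨hY0, _⟩
    · rfl
    · exact absurd rfl hY0
  · rcases h2 with ⟨rfl, rfl⟩ | ⟨_, hc'⟩
    · exact absurd rfl hY0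
    · exact hc.unique hc'

lemma IsSucc.unique {Δ : Set (Subobject X)} {Y W W' : Subobject X}
    (hsc : IsSubChain Δ) (h1 : IsSucc Δ Y W) (h2 : IsSucc Δ Y W') : W = W' := by
  rcases h1 with ⟨rfl, rfl⟩ | ⟨hY0, hc⟩
  · rcases h2 with ⟨_, rfl⟩ | ⟨hY0, _⟩
    · rfl
    · exact absurd rfl hY0
  · rcases h2 with ⟨rfl, rfl⟩ | ⟨_, hc'⟩
    · exact absurd rfl hY0
    · exact IsLimSub.unique (show ({Z | Z ∈ Δ ∧ Y < Z} : Set (Subobject X)).Nonempty from ⟨⊤, hsc.2.2, lt_top_iff_ne_top.mpr hY0⟩) hc hc'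

lemma IsPred.mem {Δ : Set (Subobject X)} {Y W : Subobject X}
    (hsc : IsSubChain Δ) (hbc : Bicomplete Δ) (hp : IsPred Δ Y W) : W ∈ Δ := by
  rcases hp with ⟨rfl, rfl⟩ | ⟨hY0, hc⟩
  · exact hsc.2.1
  · obtain ⟨W', hW'Δ, hW'⟩ := hbc.1 {Z | Z ∈ Δ ∧ Z < Y} (fun Z hZ => hZ.1)
    rwa [hc.unique hW']

lemma IsSucc.mem {Δ : Set (Subobject X)} {Y W : Subobject X}
    (hsc : IsSubChain Δ) (hbc : Bicomplete Δ) (hs : IsSucc Δ Y W) : W ∈ Δ := by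
  rcases hs with ⟨rfl, rfl⟩ | ⟨hY0, hc⟩
  · exact hsc.2.2
  · obtain ⟨W', hW'Δ, hW'⟩ := hbc.2 {Z | Z ∈ Δ ∧ Y < Z} (fun Z hZ => hZ.1)
    rwa [IsLimSub.unique (show ({Z | Z ∈ Δ ∧ Y < Z} : Set (Subobject X)).Nonempty from ⟨⊤, hsc.2.2, lt_top_iff_ne_top.mpr hY0⟩) hc hW']

lemma isSucc_of_isPred {Δ : Set (Subobject X)} {Y W : Subobject X}
    (hsc : IsSubChain Δ) (hbc : Bicomplete Δ) (hY : Y ∈ Δ)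
    (hp : IsPred Δ Y W) (hne : W ≠ Y) : IsSucc Δ W Y := by
  have hWY : W < Y := hp.le.lt_of_ne hne
  rcases hp with ⟨rfl, rfl⟩ | ⟨hY0, hc⟩
  · exact absurd rfl hne
  obtain ⟨V, hVΔ, hV⟩ := hbc.2 {Z | Z ∈ Δ ∧ W < Z} (fun Z hZ => hZ.1)
  have hVY : V = Y := by
    apply le_antisymm
    · exact hV.choose Y ⟨hY, hWY⟩
    · refine hV.le_of_forall_le ⟨Y, hY, hWY⟩ fun Z hZ => ?_
      rcases eq_or_ne Z Y with rfl | hZY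
      · exact le_rfl
      rcases (hsc.1.total hZ.1 hY) with hZle | hYle
      · have hZW : Z ≤ W := hc.choose Z ⟨hZ.1, hZle.lt_of_ne hZY⟩
        exact absurd (lt_of_le_of_lt hZW hZ.2) (lt_irrefl Z)
      · exact hYle
  exact Or.inr ⟨ne_top_of_lt hWY, hVY ▸ hV⟩

lemma isPred_of_isSucc {Δ : Set (Subobject X)} {Y W : Subobject X}
    (hsc : IsSubChain Δ) (hbc : Bicomplete Δ) (hY : Y ∈ Δ)
    (hs : IsSucc Δ Y W) (hne : W ≠ Y) : IsPred Δ W Y := by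
  have hYW : Y < W := (hs.ge hsc).lt_of_ne (Ne.symm hne)
  rcases hs with ⟨rfl, rfl⟩ | ⟨hY0, hc⟩
  · exact absurd rfl hne
  obtain ⟨U, hUΔ, hU⟩ := hbc.1 {Z | Z ∈ Δ ∧ Z < W} (fun Z hZ => hZ.1)
  have hUY : U = Y := by
    apply le_antisymm
    · refine hU.le_of_forall_le fun Z hZ => ?_
      rcases eq_or_ne Z Y with rfl | hZY
      · exact le_rfl
      rcases (hsc.1.total hY hZ.1) with hYle | hZle
      · have hWZ : W ≤ Z := hc.choose Z ⟨hZ.1, hYle.lt_of_ne (Ne.symm hZY)⟩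
        exact absurd (lt_of_le_of_lt hWZ hZ.2) (lt_irrefl W)
      · exact hZle
    · exact hU.choose Y ⟨hY, hYW⟩
  exact Or.inr ⟨ne_bot_of_gt hYW, hUY ▸ hU⟩

/-- Proposition 3.9: in a bicomplete subobject chain, predecessors and successors are
inverse to one another, and the lower and upper subfactor multisets coincide. -/
theorem statement8 [EssentiallySmall.{w} 𝒜] (X : 𝒜) (Δ : Set (Subobject X))
    (hsc : IsSubChain Δ) (hbc : Bicomplete Δ) :
    (∀ Y ∈ Δ, ∀ W, IsPred Δ Y W → W ≠ Y → IsSucc Δ W Y) ∧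
    (∀ Y ∈ Δ, ∀ W, IsSucc Δ Y W → W ≠ Y → IsPred Δ W Y) ∧
    ∃ e : lowerIdx Δ ≃ upperIdx Δ,
      ∀ (i : lowerIdx Δ) (W : Subobject X) (hW : W ≤ i.1) (V : Subobject X)
        (hV : (e i).1 ≤ V),
        IsPred Δ i.1 W → IsSucc Δ (e i).1 V →
        Nonempty (quot W i.1 hW ≅ quot (e i).1 V hV) := by
  refine ⟨fun Y hY W hp hne => isSucc_of_isPred hsc hbc hY hp hne,
    fun Y hY W hs hne => isPred_of_isSucc hsc hbc hY hs hne, ?_⟩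
  classical
  let p : lowerIdx Δ → Subobject X := fun i => i.2.2.choose
  have hp : ∀ i : lowerIdx Δ, IsPred Δ i.1 (p i) ∧ p i ≠ i.1 := fun i => i.2.2.choose_spec
  let s : upperIdx Δ → Subobject X := fun j => j.2.2.choose
  have hs : ∀ j : upperIdx Δ, IsSucc Δ j.1 (s j) ∧ s j ≠ j.1 := fun j => j.2.2.choose_spec
  let f : lowerIdx Δ → upperIdx Δ := fun i =>
    ⟨p i, (hp i).1.mem hsc hbc,
      ⟨i.1, isSucc_of_isPred hsc hbc i.2.1 (hp i).1 (hp i).2, Ne.symm (hp i).2⟩⟩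
  let g : upperIdx Δ → lowerIdx Δ := fun j =>
    ⟨s j, (hs j).1.mem hsc hbc,
      ⟨j.1, isPred_of_isSucc hsc hbc j.2.1 (hs j).1 (hs j).2, Ne.symm (hs j).2⟩⟩
  have hgf : ∀ i, g (f i) = i := fun i => Subtype.ext <|
    IsSucc.unique hsc (hs (f i)).1
      (isSucc_of_isPred hsc hbc i.2.1 (hp i).1 (hp i).2)
  have hfg : ∀ j, f (g j) = j := fun j => Subtype.ext <|
    IsPred.unique (hp (g j)).1
      (isPred_of_isSucc hsc hbc j.2.1 (hs j).1 (hs j).2)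
  refine ⟨⟨f, g, hgf, hfg⟩, fun i W hW V hV hpW hsV => ?_⟩
  have h1 : W = p i := hpW.unique (hp i).1
  have h2 : V = i.1 :=
    IsSucc.unique hsc hsV (isSucc_of_isPred hsc hbc i.2.1 (hp i).1 (hp i).2)
  subst h1
  subst h2
  exact ⟨Iso.refl _⟩

end JHS
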